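/- For the family ρ(α,β) = α·(|0⟩⟨0|⊗𝟙/d_B) + β·(𝟙/d_A⊗|0⟩⟨0|) + (1−α−β)·|00⟩⟨00| with α,β ≥ 0, α+β ≤ 1, one has S_L(ρ_A) = D_A(2β−β²), S_L(ρ_B) = D_B(2α−α²), and S_L(ρ(α,β)) = D_B(2α−α²) + D_A(2β−β²) − 2 D_A D_B αβ, where D_A=(d_A−1)/d_A, D_B=(d_B−1)/d_B; these values saturate dimensionally sharp subadditivity: S_L(ρ(α,β)) = S_L(ρ_A)+S_L(ρ_B) − 2 D_A D_B (1−√(1−S_L(ρ_A)/D_A))(1−√(1−S_L(ρ_B)/D_B)). -/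

import Mathlib

set_option maxHeartbeats 1600000

open Matrix
open scoped ComplexOrder Kronecker

noncomputable def linEntropy {n : Type*} [Fintype n] (ρ : Matrix n n ℂ) : ℝ :=
  1 - ((ρ * ρ).trace).re

noncomputable def ptraceB {dA dB : ℕ} (ρ : Matrix (Fin dA × Fin dB) (Fin dA × Fin dB) ℂ) :
    Matrix (Fin dA) (Fin dA) ℂ := fun i j => ∑ k, ρ (i, k) (j, k)

noncomputable def ptraceA {dA dB : ℕ} (ρ : Matrix (Fin dA × Fin dB) (Fin dA × Fin dB) ℂ) :
    Matrix (Fin dB) (Fin dB) ℂ := fun i j => ∑ k, ρ (k, i) (k, j)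

/-- For the family
`ρ(α,β) = α (|0⟩⟨0| ⊗ 𝟙/d_B) + β (𝟙/d_A ⊗ |0⟩⟨0|) + (1-α-β)|00⟩⟨00|`
the linear entropies are as stated and saturate dimensionally sharp subadditivity. -/
theorem family_saturates_DSSA (dA dB : ℕ) (hA : 2 ≤ dA) (hB : 2 ≤ dB)
    (α β : ℝ) (hα : 0 ≤ α) (hβ : 0 ≤ β) (hαβ : α + β ≤ 1)
    (DA DB : ℝ) (hDA : DA = ((dA : ℝ) - 1) / dA) (hDB : DB = ((dB : ℝ) - 1) / dB)
    (ρ : Matrix (Fin dA × Fin dB) (Fin dA × Fin dB) ℂ)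
    (hρdef : ρ = (α : ℂ) •
        ((Matrix.single (⟨0, by omega⟩ : Fin dA) (⟨0, by omega⟩ : Fin dA) (1 : ℂ)) ⊗ₖ
          ((dB : ℂ)⁻¹ • (1 : Matrix (Fin dB) (Fin dB) ℂ)))
      + (β : ℂ) •
        (((dA : ℂ)⁻¹ • (1 : Matrix (Fin dA) (Fin dA) ℂ)) ⊗ₖ
          (Matrix.single (⟨0, by omega⟩ : Fin dB) (⟨0, by omega⟩ : Fin dB) (1 : ℂ)))
      + ((1 - α - β : ℝ) : ℂ) •
        (Matrix.single
          ((⟨0, by omega⟩ : Fin dA), (⟨0, by omega⟩ : Fin dB))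
          ((⟨0, by omega⟩ : Fin dA), (⟨0, by omega⟩ : Fin dB)) (1 : ℂ))) :
    linEntropy (ptraceB ρ) = DA * (2 * β - β ^ 2) ∧
    linEntropy (ptraceA ρ) = DB * (2 * α - α ^ 2) ∧
    linEntropy ρ = DB * (2 * α - α ^ 2) + DA * (2 * β - β ^ 2) - 2 * DA * DB * α * β ∧
    linEntropy ρ = linEntropy (ptraceB ρ) + linEntropy (ptraceA ρ)
      - 2 * DA * DB * (1 - Real.sqrt (1 - linEntropy (ptraceB ρ) / DA))
        * (1 - Real.sqrt (1 - linEntropy (ptraceA ρ) / DB)) := by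
  have hAne : (dA:ℂ) ≠ 0 := by exact_mod_cast (by omega : dA ≠ 0)
  have hBne : (dB:ℂ) ≠ 0 := by exact_mod_cast (by omega : dB ≠ 0)
  have hAne' : (dA:ℝ) ≠ 0 := by exact_mod_cast (by omega : dA ≠ 0)
  have hBne' : (dB:ℝ) ≠ 0 := by exact_mod_cast (by omega : dB ≠ 0)
  have hentry : ∀ i j k l, ρ (i,k) (j,l) =
      (if (⟨0, by omega⟩ : Fin dA) = i ∧ (⟨0, by omega⟩ : Fin dA) = j ∧ k = l then (α:ℂ)/dB else 0)
      + (if (⟨0, by omega⟩ : Fin dB) = k ∧ (⟨0, by omega⟩ : Fin dB) = l ∧ i = j then (β:ℂ)/dA else 0)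
      + (if (⟨0, by omega⟩ : Fin dA) = i ∧ (⟨0, by omega⟩ : Fin dA) = j ∧ (⟨0, by omega⟩ : Fin dB) = k ∧ (⟨0, by omega⟩ : Fin dB) = l
          then ((1-α-β:ℝ):ℂ) else 0) := by
    intro i j k l
    subst hρdef
    simp only [Matrix.add_apply, Matrix.smul_apply, Matrix.kroneckerMap_apply,
      Matrix.single, Matrix.of_apply, Matrix.one_apply, Prod.mk.injEq, smul_eq_mul]
    split_ifs <;> simp_all [Fin.ext_iff]
    all_goals first
    | ring1
    | (exfalso; casesm* _ ∧ _; omega)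
  -- the partial trace over B
  have hPB : ptraceB ρ = Matrix.diagonal
      (fun i => (if (⟨0, by omega⟩ : Fin dA) = i then ((1-β:ℝ):ℂ) else 0) + (β:ℂ)/dA) := by
    ext i j
    simp only [ptraceB, hentry, Matrix.diagonal_apply]
    by_cases hi : (⟨0, by omega⟩ : Fin dA) = i <;>
      by_cases hj : (⟨0, by omega⟩ : Fin dA) = j <;>
      by_cases hij : i = j <;>
      (simp [hi, hj, hij, eq_comm, Finset.sum_add_distrib, Finset.sum_ite_eq,
             Finset.sum_const, Finset.card_univ, nsmul_eq_mul]
       try field_simp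
       try ring1)
  -- the partial trace over A
  have hPA : ptraceA ρ = Matrix.diagonal
      (fun k => (if (⟨0, by omega⟩ : Fin dB) = k then ((1-α:ℝ):ℂ) else 0) + (α:ℂ)/dB) := by
    ext k l
    simp only [ptraceA, hentry, Matrix.diagonal_apply]
    by_cases hk : (⟨0, by omega⟩ : Fin dB) = k <;>
      by_cases hl : (⟨0, by omega⟩ : Fin dB) = l <;>
      by_cases hkl : k = l <;>
      (simp [hk, hl, hkl, eq_comm, Finset.sum_add_distrib, Finset.sum_ite_eq,
             Finset.sum_const, Finset.card_univ, nsmul_eq_mul]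
       try field_simp
       try ring1)
  -- trace of (ρ_A)²
  have htrA : ((ptraceB ρ * ptraceB ρ).trace)
      = (((1-β)^2 + 2*(1-β)*β/dA + β^2/dA : ℝ) : ℂ) := by
    rw [hPB, Matrix.diagonal_mul_diagonal, Matrix.trace_diagonal]
    have hsq : ∀ i : Fin dA,
        ((if (⟨0, by omega⟩ : Fin dA) = i then ((1-β:ℝ):ℂ) else 0) + (β:ℂ)/dA)
          * ((if (⟨0, by omega⟩ : Fin dA) = i then ((1-β:ℝ):ℂ) else 0) + (β:ℂ)/dA)
        = (if (⟨0, by omega⟩ : Fin dA) = i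
            then (((1-β:ℝ):ℂ))^2 + 2*((1-β:ℝ):ℂ)*((β:ℂ)/dA) else 0) + ((β:ℂ)/dA)^2 := by
      intro i; split_ifs <;> ring1
    simp only [Pi.mul_apply, hsq, Finset.sum_add_distrib, Finset.sum_ite_eq,
      Finset.sum_const, Finset.card_univ, Fintype.card_fin, nsmul_eq_mul, Finset.mem_univ,
      if_pos]
    push_cast
    field_simp
  -- trace of (ρ_B)²
  have htrB : ((ptraceA ρ * ptraceA ρ).trace)
      = (((1-α)^2 + 2*(1-α)*α/dB + α^2/dB : ℝ) : ℂ) := by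
    rw [hPA, Matrix.diagonal_mul_diagonal, Matrix.trace_diagonal]
    have hsq : ∀ k : Fin dB,
        ((if (⟨0, by omega⟩ : Fin dB) = k then ((1-α:ℝ):ℂ) else 0) + (α:ℂ)/dB)
          * ((if (⟨0, by omega⟩ : Fin dB) = k then ((1-α:ℝ):ℂ) else 0) + (α:ℂ)/dB)
        = (if (⟨0, by omega⟩ : Fin dB) = k
            then (((1-α:ℝ):ℂ))^2 + 2*((1-α:ℝ):ℂ)*((α:ℂ)/dB) else 0) + ((α:ℂ)/dB)^2 := by
      intro k; split_ifs <;> ring1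
    simp only [Pi.mul_apply, hsq, Finset.sum_add_distrib, Finset.sum_ite_eq,
      Finset.sum_const, Finset.card_univ, Fintype.card_fin, nsmul_eq_mul, Finset.mem_univ,
      if_pos]
    push_cast
    field_simp
  -- ρ itself is diagonal
  have hdg : ρ = Matrix.diagonal (fun p : Fin dA × Fin dB =>
      (if (⟨0, by omega⟩ : Fin dA) = p.1 then (α:ℂ)/dB else 0)
      + (if (⟨0, by omega⟩ : Fin dB) = p.2 then (β:ℂ)/dA else 0)
      + (if (⟨0, by omega⟩ : Fin dA) = p.1 ∧ (⟨0, by omega⟩ : Fin dB) = p.2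
          then ((1-α-β:ℝ):ℂ) else 0)) := by
    ext p q
    obtain ⟨i, k⟩ := p
    obtain ⟨j, l⟩ := q
    rw [hentry]
    clear hentry hρdef hPB hPA htrA htrB hAne hBne hAne' hBne' hα hβ hαβ hDA hDB
    simp only [Matrix.diagonal_apply, Prod.mk.injEq]
    split_ifs <;>
      first
      | ring1
      | (exfalso; casesm* _ ∧ _; simp_all [Fin.ext_iff] <;> omega)
  -- trace of ρ²
  have htr : ((ρ * ρ).trace)
      = ((α^2/dB + β^2/dA + (1-α-β)^2 + 2*α*β/(dA*dB)
          + 2*α*(1-α-β)/dB + 2*β*(1-α-β)/dA : ℝ) : ℂ) := by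
    rw [hdg, Matrix.diagonal_mul_diagonal, Matrix.trace_diagonal]
    have hsq : ∀ p : Fin dA × Fin dB,
        ((if (⟨0, by omega⟩ : Fin dA) = p.1 then (α:ℂ)/dB else 0)
          + (if (⟨0, by omega⟩ : Fin dB) = p.2 then (β:ℂ)/dA else 0)
          + (if (⟨0, by omega⟩ : Fin dA) = p.1 ∧ (⟨0, by omega⟩ : Fin dB) = p.2
              then ((1-α-β:ℝ):ℂ) else 0))
        * ((if (⟨0, by omega⟩ : Fin dA) = p.1 then (α:ℂ)/dB else 0)
          + (if (⟨0, by omega⟩ : Fin dB) = p.2 then (β:ℂ)/dA else 0)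
          + (if (⟨0, by omega⟩ : Fin dA) = p.1 ∧ (⟨0, by omega⟩ : Fin dB) = p.2
              then ((1-α-β:ℝ):ℂ) else 0))
        = (if (⟨0, by omega⟩ : Fin dA) = p.1 then ((α:ℂ)/dB)^2 else 0)
          + (if (⟨0, by omega⟩ : Fin dB) = p.2 then ((β:ℂ)/dA)^2 else 0)
          + (if (⟨0, by omega⟩ : Fin dB) = p.2 then
              (if (⟨0, by omega⟩ : Fin dA) = p.1 then
                (((1-α-β:ℝ):ℂ))^2 + 2*((α:ℂ)/dB)*((β:ℂ)/dA)
                  + 2*((α:ℂ)/dB)*((1-α-β:ℝ):ℂ) + 2*((β:ℂ)/dA)*((1-α-β:ℝ):ℂ)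
               else 0) else 0) := by
      intro p
      split_ifs <;> first | ring1 | tauto
    simp only [Pi.mul_apply, hsq]
    rw [Fintype.sum_prod_type]
    simp only [Finset.sum_add_distrib, Finset.sum_ite_eq, Finset.sum_const,
      Finset.card_univ, Fintype.card_fin, nsmul_eq_mul, Finset.mem_univ, if_pos,
      mul_ite, mul_zero]
    push_cast
    field_simp
    simp only [Finset.sum_const, Finset.card_univ, Fintype.card_fin, nsmul_eq_mul,
      mul_ite, mul_zero, Finset.sum_ite_eq, Finset.mem_univ, if_pos]
    field_simp
    ring1
  -- the three entropy values
  have hSA : linEntropy (ptraceB ρ) = DA * (2 * β - β ^ 2) := by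
    unfold linEntropy
    rw [htrA, Complex.ofReal_re, hDA]
    field_simp
    ring1
  have hSB : linEntropy (ptraceA ρ) = DB * (2 * α - α ^ 2) := by
    unfold linEntropy
    rw [htrB, Complex.ofReal_re, hDB]
    field_simp
    ring1
  have hS : linEntropy ρ = DB * (2 * α - α ^ 2) + DA * (2 * β - β ^ 2)
      - 2 * DA * DB * α * β := by
    unfold linEntropy
    rw [htr, Complex.ofReal_re, hDA, hDB]
    field_simp
    ring1
  refine ⟨hSA, hSB, hS, ?_⟩
  have hDApos : (0:ℝ) < DA := by
    rw [hDA]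
    apply div_pos <;> [skip; positivity] <;>
      · have : (2:ℝ) ≤ dA := by exact_mod_cast hA
        linarith
  have hDBpos : (0:ℝ) < DB := by
    rw [hDB]
    apply div_pos <;> [skip; positivity] <;>
      · have : (2:ℝ) ≤ dB := by exact_mod_cast hB
        linarith
  have hβ1 : (0:ℝ) ≤ 1 - β := by linarith
  have hα1 : (0:ℝ) ≤ 1 - α := by linarith
  have e1 : 1 - linEntropy (ptraceB ρ) / DA = (1 - β)^2 := by
    rw [hSA, mul_comm, mul_div_assoc, div_self (ne_of_gt hDApos)]
    ring
  have e2 : 1 - linEntropy (ptraceA ρ) / DB = (1 - α)^2 := by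
    rw [hSB, mul_comm, mul_div_assoc, div_self (ne_of_gt hDBpos)]
    ring
  rw [e1, e2, Real.sqrt_sq hβ1, Real.sqrt_sq hα1, hSA, hSB, hS]
  ring
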